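/- Let 0 < α < 1, ω ∈ ℝ, and t > 0. Then (1/Γ(1−α)) ∫_0^t (d/dτ)[E_α(ω τ^α)] · (t−τ)^{−α} dτ = ω · E_α(ω t^α); that is, the Caputo fractional derivative of order α of the function τ ↦ E_α(ω τ^α) at t equals ω E_α(ω t^α). -/

import Mathlib

open Real Set MeasureTheory

lemma gamma_lower {R y : ℝ} (hR : 1 ≤ R) (hy : 2 ≤ y) :
    R ^ (y - 2) / Real.exp R ≤ Real.Gamma y := by
  have hR0 : (0:ℝ) < R := lt_of_lt_of_le one_pos hR
  set n := ⌊y⌋₊ with hn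
  have hny : (n : ℝ) ≤ y := Nat.floor_le (by linarith)
  have hn2 : 2 ≤ n := Nat.le_floor (by exact_mod_cast hy)
  have hn2' : (2:ℝ) ≤ (n:ℝ) := by exact_mod_cast hn2
  have h1 : Real.Gamma (n : ℝ) ≤ Real.Gamma y := by
    rcases eq_or_lt_of_le hny with h | h
    · rw [h]
    · exact le_of_lt (Real.Gamma_strictMonoOn_Ici hn2' (le_trans hn2' hny) h)
  have h1n : 1 ≤ n := le_trans one_le_two hn2
  have hfac : Real.Gamma (n : ℝ) = (Nat.factorial (n - 1) : ℝ) := by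
    have hcast : (n : ℝ) = ((n - 1 : ℕ) : ℝ) + 1 := by
      push_cast [Nat.cast_sub h1n]; ring
    rw [hcast, Real.Gamma_nat_eq_factorial]
  have h2 : R ^ ((n - 1 : ℕ) : ℕ) / Real.exp R ≤ (Nat.factorial (n - 1) : ℝ) := by
    rw [div_le_iff₀ (Real.exp_pos R)]
    have h := Real.pow_div_factorial_le_exp (x := R) (le_of_lt hR0) (n-1)
    rw [div_le_iff₀ (by positivity)] at h
    linarith [h]
  have h3 : R ^ (y - 2) ≤ R ^ ((n - 1 : ℕ) : ℕ) := by
    rw [← Real.rpow_natCast R (n-1)]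
    apply Real.rpow_le_rpow_of_exponent_le hR
    have := Nat.lt_floor_add_one y
    push_cast [Nat.cast_sub h1n]
    push_cast at this
    linarith
  calc R ^ (y - 2) / Real.exp R ≤ R ^ ((n - 1 : ℕ) : ℕ) / Real.exp R := by
        gcongr
      _ ≤ (Nat.factorial (n - 1) : ℝ) := h2
      _ = Real.Gamma (n : ℝ) := hfac.symm
      _ ≤ Real.Gamma y := h1

lemma summable_master {α c r : ℝ} (hα : 0 < α) (hc : 0 < c) (hr : 0 ≤ r) :
    Summable (fun k : ℕ => ((k:ℝ)+1) * r^k / Real.Gamma (α*k + c)) := by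
  set R : ℝ := max 1 ((2*r)^(1/α)) with hR
  have hR1 : 1 ≤ R := le_max_left _ _
  have hR0 : (0:ℝ) < R := lt_of_lt_of_le one_pos hR1
  have hRα : 2*r ≤ R^α := by
    calc 2*r = ((2*r)^(1/α))^α := by
          rw [← Real.rpow_mul (by positivity), one_div_mul_cancel hα.ne', Real.rpow_one]
      _ ≤ R^α := Real.rpow_le_rpow (by positivity) (le_max_right _ _) hα.le
  have hRα0 : (0:ℝ) < R^α := Real.rpow_pos_of_pos hR0 α
  set q : ℝ := r / R^α with hq
  have hq0 : 0 ≤ q := by positivity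
  have hq2 : q ≤ 1/2 := by
    rw [hq, div_le_iff₀ hRα0]; linarith
  have hrq : r = q * R^α := by rw [hq]; field_simp
  have key : ∀ k : ℕ, 2 ≤ α*k + c →
      ((k:ℝ)+1) * r^k / Real.Gamma (α*k + c) ≤ (Real.exp R * R^(2-c)) * (((k:ℝ)+1) * q^k) := by
    intro k hk
    have hΓ : R^(α*k + c - 2)/Real.exp R ≤ Real.Gamma (α*k + c) := gamma_lower hR1 hk
    have hΓ0 : (0:ℝ) < R^(α*k + c - 2)/Real.exp R := by positivity
    have hrk : r^k = q^k * R^(α*k) := by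
      rw [hrq, mul_pow, ← Real.rpow_natCast (R^α) k, ← Real.rpow_mul hR0.le]
    calc ((k:ℝ)+1) * r^k / Real.Gamma (α*k + c)
        ≤ ((k:ℝ)+1) * r^k / (R^(α*k + c - 2)/Real.exp R) := by
          apply div_le_div_of_nonneg_left (by positivity) hΓ0 hΓ
      _ = (Real.exp R * R^(2-c)) * (((k:ℝ)+1) * q^k) := by
          rw [hrk]
          rw [div_div_eq_mul_div, div_eq_iff (by positivity)]
          have : R^(2-c) * R^(α*k + c - 2) = R^(α*k) := by
            rw [← Real.rpow_add hR0]; ring_nf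
          rw [← this]; ring
  -- reduce to shifted series
  set K : ℕ := ⌈2/α⌉₊ with hK
  rw [← summable_nat_add_iff K]
  have hsum : Summable (fun n : ℕ => (Real.exp R * R^(2-c)) * ((((n+K):ℝ)+1) * q^n)) := by
    apply Summable.mul_left
    have h1 : Summable (fun n : ℕ => (n:ℝ) * q^n) := by
      simpa using summable_pow_mul_geometric_of_norm_lt_one (k := 1) (r := q)
        (by rw [Real.norm_eq_abs, abs_of_nonneg hq0]; linarith)
    have h2 : Summable (fun n : ℕ => ((K:ℝ)+1) * q^n) :=
      (summable_geometric_of_lt_one hq0 (by linarith)).mul_left _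
    have := h1.add h2
    apply this.congr
    intro n; push_cast; ring
  apply Summable.of_nonneg_of_le ?_ ?_ hsum
  · intro n
    have hg : (0:ℝ) < Real.Gamma (α*((n+K:ℕ):ℝ)+c) := Real.Gamma_pos_of_pos (by positivity)
    exact div_nonneg (by positivity) hg.le
  · intro n
    have h2 : 2 ≤ α*((n+K:ℕ):ℝ) + c := by
      have : (2:ℝ)/α ≤ ((K:ℕ):ℝ) := Nat.le_ceil _
      have h' : 2 ≤ α * (K:ℝ) := by
        rw [div_le_iff₀ hα] at this; linarith [mul_comm α (K:ℝ)]
      have : (K:ℝ) ≤ ((n+K:ℕ):ℝ) := by push_cast; linarith [Nat.cast_nonneg (α := ℝ) n]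
      nlinarith
    have := key (n+K) h2
    push_cast at this ⊢
    calc ((n:ℝ)+K+1) * r^(n+K) / Real.Gamma (α*((n:ℝ)+K) + c)
        ≤ Real.exp R * R^(2-c) * ((((n:ℝ)+K)+1) * q^(n+K)) := this
      _ ≤ Real.exp R * R^(2-c) * ((((n:ℝ)+K)+1) * q^n) := by
          have hq' : q^(n+K) ≤ q^n := by
            calc q^(n+K) = q^n * q^K := pow_add q n K
              _ ≤ q^n * 1 := mul_le_mul_of_nonneg_left (pow_le_one₀ hq0 (by linarith)) (by positivity)
              _ = q^n := mul_one _
          have h0 : (0:ℝ) ≤ Real.exp R * R^(2-c) := by positivity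
          have h1 : (0:ℝ) ≤ ((n:ℝ)+K)+1 := by positivity
          exact mul_le_mul_of_nonneg_left (mul_le_mul_of_nonneg_left hq' h1) h0
      _ = Real.exp R * R^(2-c) * (((n:ℝ)+K+1) * q^n) := by ring

lemma real_beta {a b T : ℝ} (ha : 0 < a) (hb : 0 < b) (hT : 0 < T) :
    ∫ τ in (0:ℝ)..T, τ^(a-1) * (T-τ)^(b-1)
      = Real.Gamma a * Real.Gamma b / Real.Gamma (a+b) * T^(a+b-1) := by
  have hβ := Complex.betaIntegral_scaled (a:ℂ) (b:ℂ) hT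
  have hΓ := Complex.Gamma_mul_Gamma_eq_betaIntegral
    (s := (a:ℂ)) (t := (b:ℂ)) (by simpa using ha) (by simpa using hb)
  have hΓab : Complex.Gamma ((a:ℂ)+(b:ℂ)) ≠ 0 := by
    rw [← Complex.ofReal_add, Complex.Gamma_ofReal]
    exact_mod_cast (Real.Gamma_pos_of_pos (by linarith)).ne'
  have hbeta : Complex.betaIntegral (a:ℂ) (b:ℂ)
      = Complex.Gamma a * Complex.Gamma b / Complex.Gamma ((a:ℂ)+(b:ℂ)) := by
    rw [hΓ, mul_comm, mul_div_assoc, div_self hΓab, mul_one]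
  -- complexified integrand equals ofReal of real integrand on [0,T]
  have hcongr : EqOn (fun x : ℝ => ((x^(a-1) * (T-x)^(b-1) : ℝ) : ℂ))
      (fun x : ℝ => (x:ℂ)^((a:ℂ)-1) * ((T:ℂ)-(x:ℂ))^((b:ℂ)-1)) (uIcc 0 T) := by
    intro x hx
    rw [uIcc_of_le hT.le] at hx
    simp only [Complex.ofReal_mul]
    rw [Complex.ofReal_cpow hx.1, Complex.ofReal_cpow (by linarith [hx.2] : (0:ℝ) ≤ T - x)]
    push_cast
    ring_nf
  have := intervalIntegral.integral_congr (μ := volume) hcongr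
  rw [intervalIntegral.integral_ofReal] at this
  have hals : ((∫ τ in (0:ℝ)..T, τ^(a-1) * (T-τ)^(b-1) : ℝ) : ℂ)
      = (T:ℂ)^((a:ℂ)+(b:ℂ)-1) * (Complex.Gamma a * Complex.Gamma b / Complex.Gamma ((a:ℂ)+(b:ℂ))) := by
    rw [this]
    push_cast at hβ ⊢
    rw [hβ, hbeta]
  rw [show ((a:ℂ)+(b:ℂ)-1) = (((a+b-1 : ℝ)):ℂ) by push_cast; ring,
    ← Complex.ofReal_cpow hT.le, Complex.Gamma_ofReal, Complex.Gamma_ofReal,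
    ← Complex.ofReal_add, Complex.Gamma_ofReal] at hals
  have : ((∫ τ in (0:ℝ)..T, τ^(a-1) * (T-τ)^(b-1) : ℝ) : ℂ)
      = (((T^(a+b-1) * (Real.Gamma a * Real.Gamma b / Real.Gamma (a+b)) : ℝ)) : ℂ) := by
    rw [hals]; push_cast; ring
  have := Complex.ofReal_inj.mp this
  rw [this]; ring

lemma ii_rpow_mul_rpow {a b T : ℝ} (ha : -1 < a) (hb : -1 < b) (hT : 0 < T) :
    IntervalIntegrable (fun τ => τ^a * (T-τ)^b) volume 0 T := by
  have h1 : IntervalIntegrable (fun τ => τ^a * (T-τ)^b) volume 0 (T/2) := by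
    apply IntervalIntegrable.mul_continuousOn (intervalIntegral.intervalIntegrable_rpow' ha)
    apply ContinuousOn.rpow_const (f := fun x : ℝ => T - x) (by fun_prop)
    intro x hx
    rw [uIcc_of_le (by linarith)] at hx
    left
    have h2 := hx.2
    intro h
    have : x = T := by linarith
    linarith
  have h2 : IntervalIntegrable (fun τ => τ^a * (T-τ)^b) volume (T/2) T := by
    have hbase : IntervalIntegrable (fun τ : ℝ => (T-τ)^b) volume (T/2) T := by
      have h0 := ((intervalIntegral.intervalIntegrable_rpow' hb (a := T/2) (b := 0)).comp_sub_left T)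
      rw [show T - T/2 = T/2 by ring, show T - 0 = T by ring] at h0
      exact h0
    apply hbase.continuousOn_mul (g := fun τ : ℝ => τ^a)
    apply ContinuousOn.rpow_const (f := fun x : ℝ => x) (by fun_prop)
    intro x hx
    rw [uIcc_of_le (by linarith)] at hx
    left
    have h2 := hx.1
    intro h; rw [h] at h2; linarith
  exact h1.trans h2

/-- Two-parameter Mittag-Leffler function of a real argument; terms at poles of Γ
are interpreted as 0 (in Lean, division by Γ = 0 gives 0). -/
noncomputable def mittagLeffler (α σ x : ℝ) : ℝ :=
  ∑' k : ℕ, x ^ k / Real.Gamma (α * (k : ℝ) + σ)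

lemma ml_eq {α σ ω x : ℝ} (hx : 0 ≤ x) :
    mittagLeffler α σ (ω * x^α) = ∑' k : ℕ, (ω^k / Real.Gamma (α*k+σ)) * x^(α*k) := by
  unfold mittagLeffler
  congr 1; ext k
  rw [mul_pow, ← Real.rpow_natCast (x^α) k, ← Real.rpow_mul hx]
  ring

lemma pow_aux {ω s : ℝ} (hs : 0 ≤ s) (α : ℝ) (k : ℕ) :
    (|ω| * s^α)^k = |ω|^k * s^(α*k) := by
  rw [mul_pow, ← Real.rpow_natCast (s^α) k, ← Real.rpow_mul hs]

lemma deriv_ml {α ω t τ : ℝ} (hα0 : 0 < α) (ht : 0 < t) (hτ : τ ∈ Ioo 0 t) :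
    HasDerivAt (fun x => mittagLeffler α 1 (ω * x^α))
      (∑' k : ℕ, (ω^k / Real.Gamma (α*k+1)) * ((α*k) * τ^(α*k-1))) τ := by
  obtain ⟨hτ0, hτt⟩ := hτ
  set r : ℝ := |ω| * (t+1)^α with hr
  have hr0 : 0 ≤ r := by positivity
  set u : ℕ → ℝ := fun k => (2*α/τ) * (((k:ℝ)+1) * r^k / Real.Gamma (α*k+1)) with hu_def
  have hu : Summable u := (summable_master hα0 one_pos hr0).mul_left _
  have ht1 : (0:ℝ) < t + 1 := by linarith
  have hmem : τ ∈ Ioo (τ/2) (t+1) := ⟨by linarith, by linarith⟩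
  have hΓpos : ∀ k : ℕ, (0:ℝ) < Real.Gamma (α*k+1) :=
    fun k => Real.Gamma_pos_of_pos (by positivity)
  have key : HasDerivAt (fun x => ∑' k : ℕ, (ω^k / Real.Gamma (α*k+1)) * x^(α*k))
      (∑' k : ℕ, (ω^k / Real.Gamma (α*k+1)) * ((α*k) * τ^(α*k-1))) τ := by
    apply hasDerivAt_tsum_of_isPreconnected hu isOpen_Ioo isPreconnected_Ioo
      (t := Ioo (τ/2) (t+1))
      (g := fun (k : ℕ) (x : ℝ) => (ω^k / Real.Gamma (α*k+1)) * x^(α*k))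
      (g' := fun (k : ℕ) (x : ℝ) => (ω^k / Real.Gamma (α*k+1)) * ((α*k) * x^(α*k-1)))
      (y₀ := τ)
    · intro k y hy
      exact (Real.hasDerivAt_rpow_const (Or.inl (by linarith [hy.1] : y ≠ 0))).const_mul _
    · intro k y hy
      have hy0 : (0:ℝ) < y := by have := hy.1; linarith
      have hyt : y ≤ t + 1 := le_of_lt hy.2
      rw [Real.norm_eq_abs, abs_mul, abs_div, abs_pow, abs_of_pos (hΓpos k),
        abs_of_nonneg (by positivity : (0:ℝ) ≤ (α*k) * y^(α*k-1))]
      have h1 : y^(α*k-1) = y^(α*k) * y⁻¹ := by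
        rw [Real.rpow_sub hy0, Real.rpow_one, div_eq_mul_inv]
      have h2 : y^(α*k) ≤ (t+1)^(α*k) := Real.rpow_le_rpow hy0.le hyt (by positivity)
      have h3 : y⁻¹ ≤ 2/τ := by
        rw [inv_eq_one_div, div_le_div_iff₀ hy0 (by positivity)]
        linarith [hy.1]
      calc |ω|^k / Real.Gamma (α*k+1) * ((α*k) * y^(α*k-1))
          ≤ |ω|^k / Real.Gamma (α*k+1) * ((α*((k:ℝ)+1)) * ((t+1)^(α*k) * (2/τ))) := by
            rw [h1]
            apply mul_le_mul_of_nonneg_left ?_ (by positivity)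
            apply mul_le_mul
            · nlinarith [hα0.le, Nat.cast_nonneg (α := ℝ) k]
            · exact mul_le_mul h2 h3 (by positivity) (by positivity)
            · positivity
            · positivity
        _ = u k := by
            rw [hu_def]
            simp only []
            rw [hr, pow_aux ht1.le]
            field_simp
    · exact hmem
    · apply Summable.of_norm_bounded (summable_master hα0 one_pos hr0)
      intro k
      rw [Real.norm_eq_abs, abs_mul, abs_div, abs_pow, abs_of_pos (hΓpos k),
        abs_of_nonneg (Real.rpow_nonneg hτ0.le _)]
      rw [hr, pow_aux ht1.le]
      have h2 : τ^(α*k) ≤ (t+1)^(α*k) := Real.rpow_le_rpow hτ0.le (by linarith) (by positivity)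
      rw [div_mul_eq_mul_div]
      have hk1 : (1:ℝ) ≤ (k:ℝ)+1 := by linarith [Nat.cast_nonneg (α := ℝ) k]
      have hle : |ω|^k * τ^(α*k) ≤ ((k:ℝ)+1) * (|ω|^k * (t+1)^(α*k)) := by
        have A := mul_le_mul_of_nonneg_left h2 (pow_nonneg (abs_nonneg ω) k)
        have B : |ω|^k * (t+1)^(α*k) ≤ ((k:ℝ)+1) * (|ω|^k * (t+1)^(α*k)) :=
          le_mul_of_one_le_left (by positivity) hk1
        linarith
      gcongr
    · exact hmem
  apply key.congr_of_eventuallyEq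
  filter_upwards [Ioi_mem_nhds hτ0] with x hx
  exact ml_eq (le_of_lt hx)

theorem caputo_deriv_mittagLeffler (α ω t : ℝ) (hα0 : 0 < α) (hα1 : α < 1) (ht : 0 < t) :
    (1 / Real.Gamma (1 - α)) *
        (∫ τ in (0:ℝ)..t,
          (deriv (fun τ : ℝ => mittagLeffler α 1 (ω * τ ^ α)) τ) * (t - τ) ^ (-α))
      = ω * mittagLeffler α 1 (ω * t ^ α) := by
  have h1α : (0:ℝ) < 1 - α := by linarith
  have hΓ1α : (0:ℝ) < Real.Gamma (1-α) := Real.Gamma_pos_of_pos h1α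
  set c : ℕ → ℝ := fun k => ω^k / Real.Gamma (α*k+1) with hc
  set h : ℕ → ℝ → ℝ := fun k τ => c k * ((α*k) * τ^(α*k-1)) * (t-τ)^(-α) with hh
  have hΓpos : ∀ x : ℝ, 0 < x → (0:ℝ) < Real.Gamma x := fun x hx => Real.Gamma_pos_of_pos hx
  -- h 0 is the zero function
  have hh0 : h 0 = fun _ => (0:ℝ) := by
    funext τ; simp [hh]
  -- Step 1 : replace deriv by the series, pointwise a.e.
  have step1 : (∫ τ in (0:ℝ)..t,
        (deriv (fun τ : ℝ => mittagLeffler α 1 (ω * τ ^ α)) τ) * (t - τ) ^ (-α))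
      = ∫ τ in (0:ℝ)..t, (∑' k : ℕ, h k τ) := by
    apply intervalIntegral.integral_congr_ae
    have hne : ∀ᵐ x : ℝ ∂volume, x ≠ t := by
      filter_upwards [compl_mem_ae_iff.mpr (measure_singleton t)] with x hx
      simpa using hx
    filter_upwards [hne] with τ hτne hτ
    rw [uIoc_of_le ht.le] at hτ
    have hτmem : τ ∈ Ioo 0 t := ⟨hτ.1, lt_of_le_of_ne hτ.2 hτne⟩
    rw [(deriv_ml hα0 ht hτmem).deriv]
    rw [← tsum_mul_right]
  -- integrability of each h k on Ioc 0 t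
  have hint : ∀ k : ℕ, IntegrableOn (h k) (Ioc 0 t) volume := by
    intro k
    rcases Nat.eq_zero_or_pos k with rfl | hk
    · rw [hh0]; exact integrableOn_zero
    · have hk1 : (1:ℝ) ≤ (k:ℝ) := by exact_mod_cast hk
      have hii := ii_rpow_mul_rpow (a := α*k-1) (b := -α)
        (by nlinarith) (by linarith) ht
      have : h k = fun τ => (c k * (α*k)) * (τ^(α*k-1) * (t-τ)^(-α)) := by
        funext τ; rw [hh]; ring
      rw [this]
      exact ((intervalIntegrable_iff_integrableOn_Ioc_of_le ht.le).mp (hii.const_mul _))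
  -- the beta value
  have hbeta : ∀ k : ℕ, 1 ≤ k → (∫ τ in Ioc (0:ℝ) t, τ^(α*k-1) * (t-τ)^(-α))
      = Real.Gamma (α*k) * Real.Gamma (1-α) / Real.Gamma (α*k+(1-α)) * t^(α*k+(1-α)-1) := by
    intro k hk
    have hk1 : (1:ℝ) ≤ (k:ℝ) := by exact_mod_cast hk
    have := real_beta (a := α*k) (b := 1-α) (by nlinarith) h1α ht
    rw [show α*(k:ℝ)-1 = α*k-1 by ring, show (1-α)-1 = -α by ring] at this
    rw [← intervalIntegral.integral_of_le ht.le]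
    exact this
  -- norm integrals
  have habs : ∀ k : ℕ, (∫ τ in Ioc (0:ℝ) t, ‖h k τ‖)
      = |c k| * (α*k) * (Real.Gamma (α*k) * Real.Gamma (1-α) / Real.Gamma (α*k+(1-α)) * t^(α*k+(1-α)-1))
      ∨ ((k = 0) ∧ (∫ τ in Ioc (0:ℝ) t, ‖h k τ‖) = 0) := by
    intro k
    rcases Nat.eq_zero_or_pos k with rfl | hk
    · right; refine ⟨rfl, ?_⟩; rw [hh0]; simp
    · left
      have heq : ∀ τ ∈ Ioc (0:ℝ) t, ‖h k τ‖ = (|c k| * (α*k)) * (τ^(α*k-1) * (t-τ)^(-α)) := by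
        intro τ hτ
        rw [hh, Real.norm_eq_abs, abs_mul, abs_mul, abs_mul,
          abs_of_nonneg (by positivity : (0:ℝ) ≤ α*(k:ℝ)),
          abs_of_nonneg (Real.rpow_nonneg hτ.1.le _),
          abs_of_nonneg (Real.rpow_nonneg (by linarith [hτ.2] : (0:ℝ) ≤ t - τ) _)]
        ring
      rw [setIntegral_congr_fun measurableSet_Ioc heq, MeasureTheory.integral_const_mul, hbeta k hk]
  -- plain integrals
  have hval : ∀ k : ℕ, (∫ τ in Ioc (0:ℝ) t, h k τ)
      = c k * (α*k) * (Real.Gamma (α*k) * Real.Gamma (1-α) / Real.Gamma (α*k+(1-α)) * t^(α*k+(1-α)-1))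
      ∨ ((k = 0) ∧ (∫ τ in Ioc (0:ℝ) t, h k τ) = 0) := by
    intro k
    rcases Nat.eq_zero_or_pos k with rfl | hk
    · right; refine ⟨rfl, ?_⟩; rw [hh0]; simp
    · left
      have heq : ∀ τ ∈ Ioc (0:ℝ) t, h k τ = (c k * (α*k)) * (τ^(α*k-1) * (t-τ)^(-α)) := by
        intro τ hτ; rw [hh]; ring
      rw [setIntegral_congr_fun measurableSet_Ioc heq, MeasureTheory.integral_const_mul, hbeta k hk]
  -- cleanup algebra for the shifted values
  have clean : ∀ (z : ℝ) (k : ℕ),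
      (z^(k+1)/Real.Gamma (α*((k+1:ℕ):ℝ)+1)) * (α*((k+1:ℕ):ℝ)) *
        (Real.Gamma (α*((k+1:ℕ):ℝ)) * Real.Gamma (1-α) / Real.Gamma (α*((k+1:ℕ):ℝ)+(1-α))
          * t^(α*((k+1:ℕ):ℝ)+(1-α)-1))
      = (Real.Gamma (1-α) * z) * ((z^k/Real.Gamma (α*(k:ℝ)+1)) * t^(α*(k:ℝ))) := by
    intro z k
    push_cast
    have e1 : α*((k:ℝ)+1)+(1-α) = α*(k:ℝ)+1 := by ring
    have e2 : α*((k:ℝ)+1)+(1-α)-1 = α*(k:ℝ) := by ring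
    rw [e2, e1]
    have hA : (0:ℝ) < α*((k:ℝ)+1) := by positivity
    rw [Real.Gamma_add_one hA.ne']
    have g1 : (0:ℝ) < Real.Gamma (α*((k:ℝ)+1)) := hΓpos _ hA
    have g2 : (0:ℝ) < Real.Gamma (α*(k:ℝ)+1) := hΓpos _ (by positivity)
    field_simp
    ring
  have habs' : ∀ k : ℕ, (∫ τ in Ioc (0:ℝ) t, ‖h (k+1) τ‖)
      = (Real.Gamma (1-α) * |ω|) * ((|ω|^k/Real.Gamma (α*(k:ℝ)+1)) * t^(α*(k:ℝ))) := by
    intro k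
    rcases habs (k+1) with hv | ⟨h0, _⟩
    · rw [hv, hc]
      simp only [abs_div, abs_pow, abs_of_pos (hΓpos _ (by positivity : (0:ℝ) < α*((k+1:ℕ):ℝ)+1))]
      exact clean |ω| k
    · exact absurd h0 (Nat.succ_ne_zero k)
  have hval' : ∀ k : ℕ, (∫ τ in Ioc (0:ℝ) t, h (k+1) τ)
      = (Real.Gamma (1-α) * ω) * ((ω^k/Real.Gamma (α*(k:ℝ)+1)) * t^(α*(k:ℝ))) := by
    intro k
    rcases hval (k+1) with hv | ⟨h0, _⟩
    · rw [hv, hc]; exact clean ω k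
    · exact absurd h0 (Nat.succ_ne_zero k)
  -- summability of norm integrals
  have hnorm_sum : Summable (fun k : ℕ => ∫ τ in Ioc (0:ℝ) t, ‖h k τ‖) := by
    rw [← summable_nat_add_iff 1]
    simp only [habs']
    apply Summable.mul_left
    apply Summable.of_nonneg_of_le (fun k => ?_) (fun k => ?_)
      (summable_master hα0 one_pos (by positivity : (0:ℝ) ≤ |ω| * t^α))
    · have := hΓpos (α*(k:ℝ)+1) (by positivity)
      positivity
    · rw [pow_aux ht.le]
      have := hΓpos (α*(k:ℝ)+1) (by positivity)
      rw [div_mul_eq_mul_div, div_le_div_iff_of_pos_right this]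
      exact le_mul_of_one_le_left (by positivity) (by linarith [Nat.cast_nonneg (α := ℝ) k])
  have hSv : Summable (fun k : ℕ => ∫ τ in Ioc (0:ℝ) t, h k τ) :=
    Summable.of_norm_bounded hnorm_sum (fun k => by
      simpa using norm_integral_le_integral_norm (μ := volume.restrict (Ioc 0 t)) (h k))
  have interchange : (∫ τ in Ioc (0:ℝ) t, (∑' k : ℕ, h k τ))
      = ∑' k : ℕ, ∫ τ in Ioc (0:ℝ) t, h k τ :=
    (integral_tsum_of_summable_integral_norm hint hnorm_sum).symm
  have hv0 : (∫ τ in Ioc (0:ℝ) t, h 0 τ) = 0 := by rw [hh0]; simp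
  rw [step1, intervalIntegral.integral_of_le ht.le, interchange,
    Summable.tsum_eq_zero_add hSv, hv0, zero_add]
  simp only [hval']
  rw [tsum_mul_left, ← ml_eq ht.le]
  field_simp
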